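/- Let x be a sequence of length m with distinct elements, i ∈ {1,...,m-1}, and y = τ(x,i). Then SN_y[j] = SN_x[j] for every position j ∉ {i, i+1, ref_x(i), ref_x(i+1), ref_y(i), ref_y(i+1)}. -/

import Mathlib

/-- Binary tree shapes (Cartesian trees are determined by their shape). -/
inductive BTree : Type
  | nil : BTree
  | node : BTree → BTree → BTree
deriving DecidableEq

namespace BTree

/-- Number of nodes. -/
def size : BTree → ℕ
  | nil => 0
  | node l r => size l + size r + 1

/-- Length of the leftmost path. -/
def LMP : BTree → ℕ
  | nil => 0
  | node l _ => LMP l + 1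

/-- Length of the rightmost path. -/
def RMP : BTree → ℕ
  | nil => 0
  | node _ r => RMP r + 1

end BTree

/-- Minimum value of a list (0 for the empty list). -/
def listMin : List ℤ → ℤ
  | [] => 0
  | a :: t => t.foldl min a

/-- Index (0-based) of the minimum of a list. -/
def minIdx (l : List ℤ) : ℕ := l.idxOf (listMin l)

/-- Cartesian tree of a list, with fuel for termination. -/
def ctreeAux : ℕ → List ℤ → BTree
  | 0, _ => .nil
  | _ + 1, [] => .nil
  | n + 1, a :: t =>
      let g := minIdx (a :: t)
      .node (ctreeAux n ((a :: t).take g)) (ctreeAux n ((a :: t).drop (g + 1)))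

/-- Cartesian tree of a list: the root is the position of the minimum,
its subtrees are the Cartesian trees of the prefix and suffix around it. -/
def ctreeL (l : List ℤ) : BTree := ctreeAux l.length l

/-- The factor x[a..b] (1-based positions) of a sequence, as a list. -/
def seqList (x : ℕ → ℤ) (a b : ℕ) : List ℤ :=
  (List.range (b + 1 - a)).map (fun k => x (a + k))

/-- Cartesian tree of the sequence x[1..m]. -/
def ctreeOf (m : ℕ) (x : ℕ → ℤ) : BTree := ctreeL (seqList x 1 m)

/-- Positions j < h (1-based) with x[j] < x[h]. -/
def PDset (x : ℕ → ℤ) (h : ℕ) : Finset ℕ :=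
  (Finset.Ico 1 h).filter (fun j => x j < x h)

/-- Parent-distance table: PD_x[h] = h - max{j < h : x[j] < x[h]}, 0 if no such j. -/
def PD (x : ℕ → ℤ) (h : ℕ) : ℕ :=
  if hs : (PDset x h).Nonempty then h - (PDset x h).max' hs else 0

/-- Positions h < j ≤ m with x[j] < x[h]. -/
def RPDset (m : ℕ) (x : ℕ → ℤ) (h : ℕ) : Finset ℕ :=
  (Finset.Ioc h m).filter (fun j => x j < x h)

/-- Reverse parent-distance table: RPD_x[h] = min{j > h : x[j] < x[h]} - h, 0 if no such j. -/
def RPD (m : ℕ) (x : ℕ → ℤ) (h : ℕ) : ℕ :=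
  if hs : (RPDset m x h).Nonempty then (RPDset m x h).min' hs - h else 0

/-- Referent of h: the smallest position j > h with x[j] < x[h], or -1 if none. -/
def refD (m : ℕ) (x : ℕ → ℤ) (h : ℕ) : ℤ :=
  if hs : (RPDset m x h).Nonempty then ((RPDset m x h).min' hs : ℤ) else -1

/-- Skipped-number table: SN_x[h] is the number of nodes on the rightmost path of the
left subtree of node h in C(x), i.e. the number of positions whose referent is h. -/
def SN (m : ℕ) (x : ℕ → ℤ) (h : ℕ) : ℕ :=
  ((Finset.Ico 1 h).filter (fun j => refD m x j = (h : ℤ))).card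

/-- The swap τ(x,i): exchange the entries at positions i and i+1. -/
def swapAt (x : ℕ → ℤ) (i : ℕ) : ℕ → ℤ :=
  fun j => if j = i then x (i + 1) else if j = i + 1 then x i else x j

/-- ng(T,i): the Cartesian trees obtained from a sequence realizing T by one swap
at position i (valid positions are 1 ≤ i ≤ m-1). -/
def ngi (m : ℕ) (T : BTree) (i : ℕ) : Set BTree :=
  { S | 1 ≤ i ∧ i + 1 ≤ m ∧ ∃ x : ℕ → ℤ, Set.InjOn x (Set.Icc 1 m) ∧
        ctreeOf m x = T ∧ S = ctreeOf m (swapAt x i) }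

/-- ng(T): the swap neighbourhood of T. -/
def ng (m : ℕ) (T : BTree) : Set BTree := ⋃ i, ngi m T i

/-- Number of permutations of {1,...,n} whose Cartesian tree is A. -/
noncomputable def permCount (n : ℕ) (A : BTree) : ℕ :=
  Set.ncard { σ : Equiv.Perm (Fin n) |
    ctreeL (List.ofFn (fun k : Fin n => ((σ k : ℕ) : ℤ) + 1)) = A }

/-- Product over all nodes t of A of the size of the subtree rooted at t. -/
def hookProd : BTree → ℕ
  | .nil => 1
  | .node l r => (BTree.node l r).size * hookProd l * hookProd r


lemma min'_eq_iff' {A : Finset ℕ} (hA : A.Nonempty) (j : ℕ) :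
    A.min' hA = j ↔ j ∈ A ∧ ∀ b ∈ A, j ≤ b := by
  constructor
  · rintro rfl; exact ⟨A.min'_mem hA, fun b hb => A.min'_le b hb⟩
  · rintro ⟨hj, hle⟩
    exact le_antisymm (A.min'_le j hj) (A.le_min' _ _ hle)

lemma swapAt_eq (x : ℕ → ℤ) (i j : ℕ) :
    swapAt x i j = x (Equiv.swap i (i + 1) j) := by
  unfold swapAt
  rcases eq_or_ne j i with rfl | h1
  · simp
  rcases eq_or_ne j (i + 1) with rfl | h2
  · rw [if_neg h1, if_pos rfl, Equiv.swap_apply_right]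
  · rw [if_neg h1, if_neg h2, Equiv.swap_apply_of_ne_of_ne h1 h2]

lemma swapAt_eq_of_ne (x : ℕ → ℤ) (i k : ℕ) (h1 : k ≠ i) (h2 : k ≠ i + 1) :
    swapAt x i k = x k := by
  rw [swapAt_eq, Equiv.swap_apply_of_ne_of_ne h1 h2]

lemma RPDset_swap (m i k : ℕ) (x : ℕ → ℤ) (him : i + 1 ≤ m)
    (hk1 : k ≠ i) (hk2 : k ≠ i + 1) :
    RPDset m (swapAt x i) k = (RPDset m x k).image (Equiv.swap i (i + 1)) := by
  have hinv : ∀ a : ℕ, Equiv.swap i (i + 1) (Equiv.swap i (i + 1) a) = a := fun a =>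
    Equiv.swap_apply_self _ _ a
  have hrange : ∀ j : ℕ, (k < j ∧ j ≤ m) ↔
      (k < Equiv.swap i (i + 1) j ∧ Equiv.swap i (i + 1) j ≤ m) := by
    intro j
    rcases eq_or_ne j i with rfl | h1
    · rw [Equiv.swap_apply_left]; omega
    rcases eq_or_ne j (i + 1) with rfl | h2
    · rw [Equiv.swap_apply_right]; omega
    · rw [Equiv.swap_apply_of_ne_of_ne h1 h2]
  ext j
  simp only [Finset.mem_image, RPDset, Finset.mem_filter, Finset.mem_Ioc]
  constructor
  · rintro ⟨⟨hkj, hjm⟩, hlt⟩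
    refine ⟨Equiv.swap i (i + 1) j, ⟨?_, ?_⟩, hinv j⟩
    · exact (hrange j).mp ⟨hkj, hjm⟩
    · rw [swapAt_eq, swapAt_eq_of_ne x i k hk1 hk2] at hlt
      exact hlt
  · rintro ⟨a, ⟨⟨hka, ham⟩, hlt⟩, rfl⟩
    have hr : k < Equiv.swap i (i + 1) a ∧ Equiv.swap i (i + 1) a ≤ m := by
      have := (hrange (Equiv.swap i (i + 1) a)).mp
      rw [hinv a] at this
      exact (hrange (Equiv.swap i (i + 1) a)).mpr (by rw [hinv a]; exact ⟨hka, ham⟩)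
    refine ⟨hr, ?_⟩
    rw [swapAt_eq, swapAt_eq_of_ne x i k hk1 hk2, hinv a]
    exact hlt

lemma refD_swap (m i k : ℕ) (x : ℕ → ℤ) (him : i + 1 ≤ m)
    (hk1 : k ≠ i) (hk2 : k ≠ i + 1) (j : ℕ) (hj1 : 1 ≤ j)
    (hji : j ≠ i) (hji2 : j ≠ i + 1) :
    ((j : ℤ) = refD m (swapAt x i) k ↔ (j : ℤ) = refD m x k) := by
  have hB := RPDset_swap m i k x him hk1 hk2
  have hsj : Equiv.swap i (i + 1) j = j := Equiv.swap_apply_of_ne_of_ne hji hji2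
  have hmem : ∀ b : ℕ, b ∈ (RPDset m x k).image (Equiv.swap i (i + 1)) ↔
      Equiv.swap i (i + 1) b ∈ RPDset m x k := by
    intro b
    rw [Finset.mem_image]
    constructor
    · rintro ⟨a, ha, rfl⟩; rwa [Equiv.swap_apply_self]
    · intro h; exact ⟨_, h, Equiv.swap_apply_self _ _ b⟩
  have hpt : ∀ a : ℕ, j ≤ a ↔ j ≤ Equiv.swap i (i + 1) a := by
    intro a
    rcases eq_or_ne a i with rfl | h1
    · rw [Equiv.swap_apply_left]; omega
    rcases eq_or_ne a (i + 1) with rfl | h2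
    · rw [Equiv.swap_apply_right]; omega
    · rw [Equiv.swap_apply_of_ne_of_ne h1 h2]
  unfold refD
  by_cases hA : (RPDset m x k).Nonempty
  · have hBne : (RPDset m (swapAt x i) k).Nonempty := by
      rw [hB]; exact Finset.image_nonempty.mpr hA
    rw [dif_pos hA, dif_pos hBne, Nat.cast_inj, Nat.cast_inj]
    constructor
    · intro h
      rw [eq_comm, min'_eq_iff'] at h ⊢
      obtain ⟨hjmem, hjlb⟩ := h
      rw [hB, hmem j, hsj] at hjmem
      refine ⟨hjmem, ?_⟩
      intro a ha
      rw [hpt a]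
      refine hjlb _ ?_
      rw [hB]
      exact (hmem _).mpr (by rw [Equiv.swap_apply_self]; exact ha)
    · intro h
      rw [eq_comm, min'_eq_iff'] at h ⊢
      obtain ⟨hjmem, hjlb⟩ := h
      refine ⟨by rw [hB, hmem j, hsj]; exact hjmem, ?_⟩
      intro b hb
      rw [hB, hmem b] at hb
      rw [hpt b]
      exact hjlb _ hb
  · have hBne : ¬ (RPDset m (swapAt x i) k).Nonempty := by
      rw [hB]; simpa [Finset.image_nonempty] using hA
    rw [dif_neg hA, dif_neg hBne]

theorem stmt15 (m i : ℕ) (x : ℕ → ℤ) (hx : Set.InjOn x (Set.Icc 1 m))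
    (hi1 : 1 ≤ i) (him : i + 1 ≤ m) :
    ∀ j ∈ Finset.Icc 1 m, j ≠ i → j ≠ i + 1 →
      (j : ℤ) ≠ refD m x i → (j : ℤ) ≠ refD m x (i + 1) →
      (j : ℤ) ≠ refD m (swapAt x i) i → (j : ℤ) ≠ refD m (swapAt x i) (i + 1) →
      SN m (swapAt x i) j = SN m x j := by
  intro j hj hji hji2 hrx1 hrx2 hry1 hry2
  rw [Finset.mem_Icc] at hj
  unfold SN
  congr 1
  apply Finset.filter_congr
  intro k hk
  rw [Finset.mem_Ico] at hk
  rcases eq_or_ne k i with rfl | hk1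
  · exact iff_of_false (fun h => hry1 h.symm) (fun h => hrx1 h.symm)
  rcases eq_or_ne k (i + 1) with rfl | hk2
  · exact iff_of_false (fun h => hry2 h.symm) (fun h => hrx2 h.symm)
  · have h := refD_swap m i k x him hk1 hk2 j hj.1 hji hji2
    constructor
    · intro hh; exact (h.mp hh.symm).symm
    · intro hh; exact (h.mpr hh.symm).symm
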